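/- The Gisin state ρ_G(λ,θ) = λ|ψ_θ⟩⟨ψ_θ| + (1-λ)/2 (|00⟩⟨00| + |11⟩⟨11|), where |ψ_θ⟩ = sin θ |01⟩ + cos θ |10⟩, has partial transpose with a negative eigenvalue if and only if 1 - λ < λ sin(2θ). -/

import Mathlib

open Matrix Kronecker Complex
open scoped ComplexOrder

noncomputable section

/-- Pauli matrices -/
def pauli : Fin 3 → Matrix (Fin 2) (Fin 2) ℂ
  | 0 => !![0, 1; 1, 0]
  | 1 => !![0, -Complex.I; Complex.I, 0]
  | 2 => !![1, 0; 0, -1]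

/-- The singlet Bell state |Ψ⁻⟩ = (|01⟩ - |10⟩)/√2 as a vector in ℂ²⊗ℂ². -/
def psiMinus : Fin 2 × Fin 2 → ℂ :=
  fun p => if p = (0, 1) then (1 / Real.sqrt 2 : ℝ) else
           if p = (1, 0) then (-(1 / Real.sqrt 2) : ℝ) else 0

/-- Outer product |v⟩⟨v|. -/
def outer {n : Type*} (v : n → ℂ) : Matrix n n ℂ :=
  fun i j => v i * starRingEnd ℂ (v j)

/-- The Werner state ρ_W(α) = α|Ψ⁻⟩⟨Ψ⁻| + (1-α)/4 · I₄. -/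
def wernerState (α : ℝ) : Matrix (Fin 2 × Fin 2) (Fin 2 × Fin 2) ℂ :=
  (α : ℂ) • outer psiMinus + (((1 - α) / 4 : ℝ) : ℂ) • (1 : Matrix (Fin 2 × Fin 2) (Fin 2 × Fin 2) ℂ)

/-- Partial trace over the first subsystem. -/
def ptrA {m n : Type*} [Fintype m] (ρ : Matrix (m × n) (m × n) ℂ) : Matrix n n ℂ :=
  fun i j => ∑ k, ρ (k, i) (k, j)

/-- Partial trace over the second subsystem. -/
def ptrB {m n : Type*} [Fintype n] (ρ : Matrix (m × n) (m × n) ℂ) : Matrix m m ℂ :=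
  fun i j => ∑ k, ρ (i, k) (j, k)

/-- Partial transpose on the second subsystem. -/
def ptransposeB {m n : Type*} (ρ : Matrix (m × n) (m × n) ℂ) : Matrix (m × n) (m × n) ℂ :=
  fun p q => ρ (p.1, q.2) (q.1, p.2)

/-- A density operator: positive semi-definite with unit trace. -/
def IsDensityOp {n : Type*} [Fintype n] [DecidableEq n] (ρ : Matrix n n ℂ) : Prop :=
  ρ.PosSemidef ∧ ρ.trace = 1

/-- Separability of a bipartite state: a convex combination of product density operators. -/
def IsSepState {m n : Type*} [Fintype m] [Fintype n] [DecidableEq m] [DecidableEq n]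
    (ρ : Matrix (m × n) (m × n) ℂ) : Prop :=
  ∃ (k : ℕ) (p : Fin k → ℝ) (A : Fin k → Matrix m m ℂ) (B : Fin k → Matrix n n ℂ),
    (∀ i, 0 ≤ p i) ∧ (∑ i, p i = 1) ∧
    (∀ i, IsDensityOp (A i)) ∧ (∀ i, IsDensityOp (B i)) ∧
    ρ = ∑ i, ((p i : ℂ)) • (A i ⊗ₖ B i)

/-- A Hermitian matrix has a negative eigenvalue. -/
def HasNegEigenvalue {n : Type*} [Fintype n] [DecidableEq n] (M : Matrix n n ℂ) : Prop :=
  ∃ (h : M.IsHermitian) (i : n), h.eigenvalues i < 0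

/-- Von Neumann entropy (base-2) of a matrix, via its eigenvalues (0 for non-Hermitian input). -/
def vNEntropy {n : Type*} [Fintype n] [DecidableEq n] (ρ : Matrix n n ℂ) : ℝ :=
  if h : ρ.IsHermitian then ∑ i, -(h.eigenvalues i) * Real.logb 2 (h.eigenvalues i) else 0


/-- Weyl (locally maximally mixed) two-qubit state with correlation coefficients t. -/
def weylState (t : Fin 3 → ℝ) : Matrix (Fin 2 × Fin 2) (Fin 2 × Fin 2) ℂ :=
  (1/4 : ℂ) • ((1 : Matrix (Fin 2 × Fin 2) (Fin 2 × Fin 2) ℂ) +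
    ∑ i, (t i : ℂ) • (pauli i ⊗ₖ pauli i))

/-- Matrix function via the continuous functional calculus (0 for non-Hermitian input). -/
def mfun {n : Type*} [Fintype n] [DecidableEq n] (f : ℝ → ℝ) (M : Matrix n n ℂ) :
    Matrix n n ℂ :=
  if h : M.IsHermitian then h.cfc f else 0

/-- Base-2 logarithm extended by 0 outside the support. -/
def log2supp (x : ℝ) : ℝ := if 0 < x then Real.logb 2 x else 0

/-- The Cerf–Adami conditional amplitude operator ρ_{A|B} = exp₂(log₂ ρ - log₂ (1 ⊗ ρ_B)). -/
def condAmpOp {m n : Type*} [Fintype m] [Fintype n] [DecidableEq m] [DecidableEq n]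
    (ρ : Matrix (m × n) (m × n) ℂ) : Matrix (m × n) (m × n) ℂ :=
  mfun (fun x => (2 : ℝ) ^ x)
    (mfun log2supp ρ - mfun log2supp ((1 : Matrix m m ℂ) ⊗ₖ ptrA ρ))

/-- The spin-flipped state σ_y⊗σ_y ρ* σ_y⊗σ_y. -/
def spinFlip (ρ : Matrix (Fin 2 × Fin 2) (Fin 2 × Fin 2) ℂ) :
    Matrix (Fin 2 × Fin 2) (Fin 2 × Fin 2) ℂ :=
  (pauli 1 ⊗ₖ pauli 1) * ρ.map (starRingEnd ℂ) * (pauli 1 ⊗ₖ pauli 1)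

/-- The Wootters concurrence of a two-qubit state ρ equals c: the λᵢ are the decreasingly
ordered (nonnegative) eigenvalues of ρ ρ̃ and c = max{0, √λ₁ - √λ₂ - √λ₃ - √λ₄}. -/
def ConcurrenceEq (ρ : Matrix (Fin 2 × Fin 2) (Fin 2 × Fin 2) ℂ) (c : ℝ) : Prop :=
  ∃ l : Fin 4 → ℝ, Antitone l ∧ (∀ i, 0 ≤ l i) ∧
    (ρ * spinFlip ρ).charpoly = ∏ i : Fin 4, (Polynomial.X - Polynomial.C ((l i : ℝ) : ℂ)) ∧
    c = max 0 (Real.sqrt (l 0) - Real.sqrt (l 1) - Real.sqrt (l 2) - Real.sqrt (l 3))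

/-- The state |ψ_θ⟩ = sin θ |01⟩ + cos θ |10⟩. -/
def psiTheta (θ : ℝ) : Fin 2 × Fin 2 → ℂ :=
  fun p => if p = (0, 1) then (Real.sin θ : ℝ) else
           if p = (1, 0) then (Real.cos θ : ℝ) else 0

/-- The state ρ_top = (|00⟩⟨00| + |11⟩⟨11|)/2. -/
def rhoTop : Matrix (Fin 2 × Fin 2) (Fin 2 × Fin 2) ℂ :=
  Matrix.diagonal (fun p => if p.1 = p.2 then (1/2 : ℂ) else 0)

/-- The Gisin state ρ_G(λ,θ) = λ|ψ_θ⟩⟨ψ_θ| + (1-λ) ρ_top. -/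
def gisinState (lam θ : ℝ) : Matrix (Fin 2 × Fin 2) (Fin 2 × Fin 2) ℂ :=
  (lam : ℂ) • outer (psiTheta θ) + ((1 - lam : ℝ) : ℂ) • rhoTop

/-- The Bell state |Ψ⁺⟩ = (|01⟩ + |10⟩)/√2. -/
def psiPlus : Fin 2 × Fin 2 → ℂ :=
  fun p => if p = (0, 1) then (1 / Real.sqrt 2 : ℝ) else
           if p = (1, 0) then (1 / Real.sqrt 2 : ℝ) else 0

/-- The entanglement witness W = (1/(2√3))(I + ∑ σₙ⊗σₙ). -/
def witnessW : Matrix (Fin 2 × Fin 2) (Fin 2 × Fin 2) ℂ :=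
  ((1 / (2 * Real.sqrt 3) : ℝ) : ℂ) •
    ((1 : Matrix (Fin 2 × Fin 2) (Fin 2 × Fin 2) ℂ) + ∑ i, pauli i ⊗ₖ pauli i)

lemma gisin_pt_herm (lam θ : ℝ) : (ptransposeB (gisinState lam θ)).IsHermitian := by
  ext ⟨i,j⟩ ⟨k,l⟩
  fin_cases i <;> fin_cases j <;> fin_cases k <;> fin_cases l <;>
    simp [ptransposeB, gisinState, outer, psiTheta, rhoTop, Matrix.conjTranspose_apply,
      Matrix.diagonal, Prod.ext_iff, Complex.conj_ofReal, mul_comm]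

lemma gisin_pt_quad (lam θ : ℝ) (x : Fin 2 × Fin 2 → ℂ) :
    star x ⬝ᵥ (ptransposeB (gisinState lam θ)) *ᵥ x =
      (((1-lam)/2 * Complex.normSq (x (0,0)) + (1-lam)/2 * Complex.normSq (x (1,1))
        + lam * Real.sin θ^2 * Complex.normSq (x (0,1))
        + lam * Real.cos θ^2 * Complex.normSq (x (1,0))
        + lam * Real.sin θ * Real.cos θ
            * (2 * ((starRingEnd ℂ) (x (0,0)) * x (1,1)).re) : ℝ) : ℂ) := by
  have key : star x ⬝ᵥ (ptransposeB (gisinState lam θ)) *ᵥ x =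
      (((1-lam)/2 : ℝ) : ℂ) * (x (0,0) * starRingEnd ℂ (x (0,0)) + x (1,1) * starRingEnd ℂ (x (1,1)))
      + (lam : ℂ) * (Real.sin θ : ℂ)^2 * (x (0,1) * starRingEnd ℂ (x (0,1)))
      + (lam : ℂ) * (Real.cos θ : ℂ)^2 * (x (1,0) * starRingEnd ℂ (x (1,0)))
      + (lam : ℂ) * (Real.sin θ : ℂ) * (Real.cos θ : ℂ) *
          (starRingEnd ℂ (x (0,0)) * x (1,1) + starRingEnd ℂ (x (1,1)) * x (0,0)) := by
    simp (config := { decide := true }) only [dotProduct, Matrix.mulVec,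
      Fintype.sum_prod_type, Fin.sum_univ_two,
      Pi.star_apply, ptransposeB, gisinState, outer, psiTheta, rhoTop, Matrix.diagonal,
      Matrix.add_apply, Matrix.smul_apply, Matrix.of_apply, smul_eq_mul, RCLike.star_def,
      Complex.conj_ofReal, if_true, if_false, mul_zero, zero_mul,
      map_zero, mul_one, one_mul, add_zero, zero_add]
    push_cast
    ring
  rw [key]
  have h2 : starRingEnd ℂ (x (0,0)) * x (1,1) + starRingEnd ℂ (x (1,1)) * x (0,0) =
      ((2 * ((starRingEnd ℂ) (x (0,0)) * x (1,1)).re : ℝ) : ℂ) := by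
    rw [← Complex.add_conj]
    simp [mul_comm]
  rw [h2, Complex.mul_conj, Complex.mul_conj, Complex.mul_conj, Complex.mul_conj]
  push_cast
  ring

/-- The partial transpose of the Gisin state has a negative eigenvalue iff
1 - λ < λ sin(2θ). -/
theorem gisin_ppt_criterion (lam θ : ℝ) (hlam : 0 ≤ lam ∧ lam ≤ 1)
    (hθ : 0 < θ ∧ θ < Real.pi / 2) :
    HasNegEigenvalue (ptransposeB (gisinState lam θ)) ↔
      1 - lam < lam * Real.sin (2 * θ) := by
  obtain ⟨hl0, hl1⟩ := hlam
  obtain ⟨hθ0, hθ1⟩ := hθ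
  have hpi := Real.pi_pos
  have hs : 0 < Real.sin θ := Real.sin_pos_of_pos_of_lt_pi hθ0 (by linarith)
  have hc : 0 < Real.cos θ := Real.cos_pos_of_mem_Ioo ⟨by linarith, hθ1⟩
  have hs2 : Real.sin (2*θ) = 2 * Real.sin θ * Real.cos θ := Real.sin_two_mul θ
  constructor
  · rintro ⟨h, i, hi⟩
    by_contra hcon
    push_neg at hcon
    rw [hs2] at hcon
    have hpsd : (ptransposeB (gisinState lam θ)).PosSemidef := by
      refine Matrix.PosSemidef.of_dotProduct_mulVec_nonneg (gisin_pt_herm lam θ) fun x => ?_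
      rw [gisin_pt_quad, Complex.zero_le_real]
      have hb : 0 ≤ lam * Real.sin θ * Real.cos θ := by positivity
      have hab : lam * Real.sin θ * Real.cos θ ≤ (1-lam)/2 := by nlinarith
      have hre : ((starRingEnd ℂ) (x (0,0)) * x (1,1)).re
          = (x (1,1) * (starRingEnd ℂ) (x (0,0))).re := by rw [mul_comm]
      have hkey : 0 ≤ Complex.normSq (x (1,1)) + Complex.normSq (x (0,0))
          + 2 * ((starRingEnd ℂ) (x (0,0)) * x (1,1)).re := by
        have h1 := Complex.normSq_nonneg (x (1,1) + x (0,0))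
        rw [Complex.normSq_add] at h1
        rw [hre]; linarith
      have n0 := Complex.normSq_nonneg (x (0,0))
      have n1 := Complex.normSq_nonneg (x (1,1))
      have n2 := Complex.normSq_nonneg (x (0,1))
      have n3 := Complex.normSq_nonneg (x (1,0))
      nlinarith [mul_nonneg hb hkey,
        mul_nonneg (by linarith : (0:ℝ) ≤ (1-lam)/2 - lam * Real.sin θ * Real.cos θ)
          (add_nonneg n0 n1),
        mul_nonneg (mul_nonneg hl0 (sq_nonneg (Real.sin θ))) n2,
        mul_nonneg (mul_nonneg hl0 (sq_nonneg (Real.cos θ))) n3]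
    exact absurd (hpsd.eigenvalues_nonneg i) (not_le.2 hi)
  · intro hlt
    refine ⟨gisin_pt_herm lam θ, ?_⟩
    by_contra hcon
    push_neg at hcon
    have hpsd := (Matrix.IsHermitian.posSemidef_iff_eigenvalues_nonneg (gisin_pt_herm lam θ)).mpr (fun i => hcon i)
    set x : Fin 2 × Fin 2 → ℂ :=
      fun p => if p = (0,0) then 1 else if p = (1,1) then -1 else 0 with hx
    have hq := hpsd.dotProduct_mulVec_nonneg x
    rw [gisin_pt_quad] at hq
    have hx00 : x (0,0) = 1 := by norm_num [hx]
    have hx11 : x (1,1) = -1 := by norm_num [hx]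
    have hx01 : x (0,1) = 0 := by norm_num [hx]
    have hx10 : x (1,0) = 0 := by norm_num [hx]
    rw [hx00, hx11, hx01, hx10, Complex.zero_le_real] at hq
    rw [hs2] at hlt
    norm_num at hq
    nlinarith

end
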